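/- Let A ∈ M₂(ℍ), let λ₁, λ₂ ∈ ℍ, and let q₁, q₂ ∈ ℍ² be right eigenvectors, i.e. A⬝q_i = q_i λ_i for i = 1,2 (where q_i λ_i multiplies each component on the right), such that the 2×2 quaternion matrix with columns q₁ and q₂ is invertible. Then the matrix M(t) whose columns are q₁·exp(λ₁t) and q₂·exp(λ₂t) satisfies M'(t) = A·M(t) and M(t) is invertible for every t ∈ ℝ; i.e., M is a fundamental matrix of x' = Ax. -/

import Mathlib

open Matrix

/-- The matrix whose `j`-th column is the eigenvector `q_j` right-multiplied
componentwise by `exp (t λ_j)`. -/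
noncomputable def eigMat (q₁ q₂ : Fin 2 → Quaternion ℝ) (l₁ l₂ : Quaternion ℝ) (t : ℝ) :
    Matrix (Fin 2) (Fin 2) (Quaternion ℝ) :=
  Matrix.of fun i j => (![q₁, q₂] j) i * NormedSpace.exp (t • ![l₁, l₂] j)

lemma isUnit_diagonal_of_isUnit {n : Type*} [Fintype n] [DecidableEq n]
    {R : Type*} [Ring R] (d : n → R) (h : ∀ i, IsUnit (d i)) :
    IsUnit (Matrix.diagonal d) := by
  refine isUnit_iff_exists.mpr ⟨Matrix.diagonal fun i => ((h i).unit⁻¹ : Rˣ), ?_, ?_⟩ <;>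
    rw [Matrix.diagonal_mul_diagonal] <;>
    · rw [← Matrix.diagonal_one]
      funext i
      simp [(h i).unit_spec.symm ▸ Units.mul_inv _, (h i).unit_spec.symm ▸ Units.inv_mul _]

theorem eigMat_fundamentalMatrix (A : Matrix (Fin 2) (Fin 2) (Quaternion ℝ))
    (l₁ l₂ : Quaternion ℝ) (q₁ q₂ : Fin 2 → Quaternion ℝ)
    (h₁ : A.mulVec q₁ = fun i => q₁ i * l₁)
    (h₂ : A.mulVec q₂ = fun i => q₂ i * l₂)
    (hunit : IsUnit (Matrix.of fun i j => ![q₁, q₂] j i)) :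
    (∀ t : ℝ, ∀ i j, HasDerivAt (fun s => eigMat q₁ q₂ l₁ l₂ s i j)
      ((A * eigMat q₁ q₂ l₁ l₂ t) i j) t) ∧
    (∀ t : ℝ, IsUnit (eigMat q₁ q₂ l₁ l₂ t)) := by
  constructor
  · intro t i j
    have key : (A * eigMat q₁ q₂ l₁ l₂ t) i j
        = (![q₁, q₂] j) i * ((![l₁, l₂] j) * NormedSpace.exp (t • ![l₁, l₂] j)) := by
      have : (A * eigMat q₁ q₂ l₁ l₂ t) i j
          = (A.mulVec (![q₁, q₂] j) i) * NormedSpace.exp (t • ![l₁, l₂] j) := by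
        simp [Matrix.mul_apply, eigMat, Matrix.mulVec, dotProduct, Finset.sum_mul, add_mul, mul_assoc]
      rw [this]
      fin_cases j <;> simp [h₁, h₂, mul_assoc]
    rw [key]
    exact (hasDerivAt_exp_smul_const' (𝕂 := ℝ)
      (![l₁, l₂] j) t).const_mul ((![q₁, q₂] j) i)
  · intro t
    have heq : eigMat q₁ q₂ l₁ l₂ t
        = (Matrix.of fun i j => ![q₁, q₂] j i) *
          Matrix.diagonal (fun j => NormedSpace.exp (t • ![l₁, l₂] j)) := by
      refine Matrix.ext fun i j => ?_
      simp [eigMat, Matrix.mul_diagonal]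
    rw [heq]
    exact hunit.mul (isUnit_diagonal_of_isUnit _ fun j => NormedSpace.isUnit_exp_of_mem_ball (𝕂 := ℝ)
      ((NormedSpace.expSeries_radius_eq_top ℝ (Quaternion ℝ)).symm ▸ edist_lt_top _ _))
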